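/- arXiv:1006.0941 — 5 statements merged into one kernel-verified Lean document; each statement's English description precedes it below -/
import Mathlib

section
/- With hₙ and h_∞ as the elementary earthquake boundary maps (hₙ(x) = e(x−1/n)+1/n for x > 1/n, hₙ(x) = x otherwise; h_∞(x) = ex for x > 0, h_∞(x) = x otherwise) and Qₙ = [∞, −e/n] × [0, e/n], one has L(Qₙ) = log 2 and L(hₙ∘h_∞⁻¹(Qₙ)) = log(e+1) − 1 for every n ≥ 1. -/
/-- Homogeneous coordinates of a boundary point of the upper half-plane. -/
noncomputable def liftB : OnePoint ℝ → ℝ × ℝ := fun p => Option.elim p (1, 0) (fun x => (x, 1))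

noncomputable def det2 (p q : OnePoint ℝ) : ℝ :=
  (liftB p).1 * (liftB q).2 - (liftB q).1 * (liftB p).2

/-- Cross-ratio `(a-c)(b-d)/((a-d)(b-c))` of four boundary points, with the usual
conventions at `∞`. -/
noncomputable def crossRatioB (a b c d : OnePoint ℝ) : ℝ :=
  (det2 a c * det2 b d) / (det2 a d * det2 b c)

/-- Liouville measure of the box of geodesics `[a,b] × [c,d]`. -/
noncomputable def liouvilleB (a b c d : OnePoint ℝ) : ℝ := |Real.log (|crossRatioB a b c d|)|

/-- Boundary map of the elementary earthquake of mass `1` along the geodesic `(c,∞)`. -/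
noncomputable def elemEq (c : ℝ) : OnePoint ℝ → OnePoint ℝ :=
  fun p => Option.elim p OnePoint.infty
    (fun x => ((if c < x then Real.exp 1 * (x - c) + c else x : ℝ) : OnePoint ℝ))

/-- The inverse of the boundary map `h_∞` of the elementary earthquake along `(0,∞)`. -/
noncomputable def elemEqInfInv : OnePoint ℝ → OnePoint ℝ :=
  fun p => Option.elim p OnePoint.infty
    (fun x => ((if 0 < x then x / Real.exp 1 else x : ℝ) : OnePoint ℝ))

/-- For `Qₙ = [∞, -e/n] × [0, e/n]` one has `L(Qₙ) = log 2` and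
`L(hₙ∘h_∞⁻¹(Qₙ)) = log (e+1) - 1`, where `hₙ`, `h_∞` are the boundary maps of the
elementary earthquakes along `(1/n, ∞)` and `(0, ∞)`. -/
theorem liouville_distortion_of_elementary_earthquakes (n : ℕ) (hn : 1 ≤ n) :
    liouvilleB OnePoint.infty ((-(Real.exp 1 / n) : ℝ) : OnePoint ℝ)
        ((0 : ℝ) : OnePoint ℝ) ((Real.exp 1 / n : ℝ) : OnePoint ℝ) = Real.log 2 ∧
      liouvilleB ((elemEq (1 / (n : ℝ)) ∘ elemEqInfInv) OnePoint.infty)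
        ((elemEq (1 / (n : ℝ)) ∘ elemEqInfInv) ((-(Real.exp 1 / n) : ℝ) : OnePoint ℝ))
        ((elemEq (1 / (n : ℝ)) ∘ elemEqInfInv) ((0 : ℝ) : OnePoint ℝ))
        ((elemEq (1 / (n : ℝ)) ∘ elemEqInfInv) ((Real.exp 1 / n : ℝ) : OnePoint ℝ)) =
        Real.log (Real.exp 1 + 1) - 1 := by
  have hnR : (0:ℝ) < n := by exact_mod_cast Nat.lt_of_lt_of_le Nat.zero_lt_one hn
  have he : (0:ℝ) < Real.exp 1 := Real.exp_pos 1
  have hen : (0:ℝ) < Real.exp 1 / n := div_pos he hnR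
  -- compute the images under the earthquake maps
  have h1 : (elemEq (1 / (n : ℝ)) ∘ elemEqInfInv) OnePoint.infty = OnePoint.infty := rfl
  have hcoe : ∀ x : ℝ, (elemEq (1 / (n : ℝ)) ∘ elemEqInfInv) (x : OnePoint ℝ) =
      ((if 1/(n:ℝ) < (if 0 < x then x / Real.exp 1 else x)
        then Real.exp 1 * ((if 0 < x then x / Real.exp 1 else x) - 1/(n:ℝ)) + 1/(n:ℝ)
        else (if 0 < x then x / Real.exp 1 else x) : ℝ) : OnePoint ℝ) := fun x => rfl
  have h2 : (elemEq (1 / (n : ℝ)) ∘ elemEqInfInv) ((-(Real.exp 1 / n) : ℝ) : OnePoint ℝ)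
      = ((-(Real.exp 1 / n) : ℝ) : OnePoint ℝ) := by
    rw [hcoe]
    rw [if_neg (show ¬(0:ℝ) < -(Real.exp 1 / n) by push_neg; linarith),
      if_neg (show ¬(1/(n:ℝ)) < -(Real.exp 1 / n) by
        push_neg; linarith [hen, one_div_pos.mpr hnR])]
  have h3 : (elemEq (1 / (n : ℝ)) ∘ elemEqInfInv) ((0 : ℝ) : OnePoint ℝ)
      = ((0 : ℝ) : OnePoint ℝ) := by
    rw [hcoe]
    rw [if_neg (lt_irrefl 0), if_neg (by push_neg; positivity)]
  have h4 : (elemEq (1 / (n : ℝ)) ∘ elemEqInfInv) ((Real.exp 1 / n : ℝ) : OnePoint ℝ)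
      = ((1 / (n:ℝ) : ℝ) : OnePoint ℝ) := by
    rw [hcoe]
    have hdiv : Real.exp 1 / (n:ℝ) / Real.exp 1 = 1 / (n:ℝ) := by
      field_simp
    rw [if_pos hen, hdiv, if_neg (lt_irrefl _)]
  rw [h1, h2, h3, h4]
  constructor
  · have : crossRatioB OnePoint.infty ((-(Real.exp 1 / n) : ℝ) : OnePoint ℝ)
        ((0 : ℝ) : OnePoint ℝ) ((Real.exp 1 / n : ℝ) : OnePoint ℝ) = 2 := by
      unfold crossRatioB det2 liftB
      simp only [OnePoint.infty]
      show (1 * 1 - 0 * 0) * ((-(Real.exp 1 / n)) * 1 - (Real.exp 1 / n) * 1) /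
        ((1 * 1 - (Real.exp 1 / n) * 0) * ((-(Real.exp 1 / n)) * 1 - 0 * 1)) = 2
      field_simp
      ring_nf; simp [hnR.ne']
    rw [liouvilleB, this, abs_two, abs_of_pos (Real.log_pos one_lt_two)]
  · have : crossRatioB OnePoint.infty ((-(Real.exp 1 / n) : ℝ) : OnePoint ℝ)
        ((0 : ℝ) : OnePoint ℝ) ((1 / (n:ℝ) : ℝ) : OnePoint ℝ)
        = (Real.exp 1 + 1) / Real.exp 1 := by
      unfold crossRatioB det2 liftB
      simp only [OnePoint.infty]
      show (1 * 1 - 0 * 0) * ((-(Real.exp 1 / n)) * 1 - (1 / (n:ℝ)) * 1) /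
        ((1 * 1 - (1 / (n:ℝ)) * 0) * ((-(Real.exp 1 / n)) * 1 - 0 * 1)) =
        (Real.exp 1 + 1) / Real.exp 1
      field_simp
      ring_nf; simp [hnR.ne']
    rw [liouvilleB, this]
    have hgt : (1:ℝ) < (Real.exp 1 + 1) / Real.exp 1 := by
      rw [lt_div_iff₀ he]; linarith
    rw [abs_of_pos (by positivity : (0:ℝ) < (Real.exp 1 + 1) / Real.exp 1),
      abs_of_pos (Real.log_pos hgt),
      Real.log_div (by linarith) (ne_of_gt he), Real.log_exp]
end

section
/- For every Möbius transformation T of the unit disk, every z ∈ S¹ and every geodesic ℓ not having z as an endpoint, ẽ_{T(z)}(T(ℓ)) · T'(z)^{-1} = ẽ_z(ℓ), where T(ℓ) is the geodesic with endpoints T(a), T(b). -/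
set_option maxHeartbeats 1000000


/-- The triple `(a, z, b)` of points of the plane is positively (counterclockwise)
oriented. -/
def CCW (a z b : ℂ) : Prop := 0 < ((b - a) * (starRingEnd ℂ) (z - a)).im

lemma one_add_ne (α w : ℂ) (hα : ‖α‖ < 1) (hw : ‖w‖ = 1) :
    1 + (starRingEnd ℂ) α * w ≠ 0 := by
  intro h
  have h2 : (starRingEnd ℂ) α * w = -1 := by linear_combination h
  have : ‖(starRingEnd ℂ) α * w‖ = 1 := by rw [h2]; simp
  rw [norm_mul, RCLike.norm_conj, hw, mul_one] at this
  exact absurd this (ne_of_lt hα)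

/-- Möbius covariance of `ẽ_z`: for a Möbius transformation `T` of the unit disk
(`T w = u (w + α)/(1 + ᾱ w)` with `|u| = 1`, `|α| < 1`), a boundary point `z` and a
geodesic `⟨a,b⟩` not ending at `z`, one has `ẽ_{T z}(T ℓ) · (T'(z))⁻¹ = ẽ_z(ℓ)`. -/
theorem eTilde_mobius_covariant (u α z a b : ℂ)
    (hu : ‖u‖ = 1) (hα : ‖α‖ < 1)
    (hz : ‖z‖ = 1) (ha : ‖a‖ = 1) (hb : ‖b‖ = 1)
    (hab : a ≠ b) (hza : z ≠ a) (hzb : z ≠ b) (hccw : CCW a z b)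
    (T : ℂ → ℂ) (hT : T = fun w => u * (w + α) / (1 + (starRingEnd ℂ) α * w)) :
    (T z - T a) * (T z - T b) / (T a - T b) * (deriv T z)⁻¹ =
      (z - a) * (z - b) / (a - b) := by
  have hu0 : u ≠ 0 := by intro h; rw [h, norm_zero] at hu; norm_num at hu
  have hzne := one_add_ne α z hα hz
  have hane := one_add_ne α a hα ha
  have hbne := one_add_ne α b hα hb
  have hd : 1 - (starRingEnd ℂ) α * α ≠ 0 := by
    intro h
    have h2 : (starRingEnd ℂ) α * α = 1 := by linear_combination -h
    have : ‖(starRingEnd ℂ) α * α‖ = 1 := by rw [h2]; simp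
    rw [norm_mul, RCLike.norm_conj] at this
    nlinarith [norm_nonneg α]
  have hderiv : deriv T z =
      (u * (1 - (starRingEnd ℂ) α * α)) / (1 + (starRingEnd ℂ) α * z) ^ 2 := by
    have h1 : HasDerivAt (fun w : ℂ => u * (w + α)) u z := by
      simpa using ((hasDerivAt_id z).add_const α).const_mul u
    have h2 : HasDerivAt (fun w : ℂ => 1 + (starRingEnd ℂ) α * w)
        ((starRingEnd ℂ) α) z := by
      simpa using ((hasDerivAt_id z).const_mul ((starRingEnd ℂ) α)).const_add 1
    have h3 := h1.div h2 hzne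
    rw [hT]
    have h4 : HasDerivAt (fun w => u * (w + α) / (1 + (starRingEnd ℂ) α * w)) _ z := h3
    rw [h4.deriv]
    congr 1; ring
  have hzab : z - a ≠ 0 := sub_ne_zero.mpr hza
  have hzbb : z - b ≠ 0 := sub_ne_zero.mpr hzb
  have habb : a - b ≠ 0 := sub_ne_zero.mpr hab
  have hTab : T a - T b =
      u * (1 - (starRingEnd ℂ) α * α) * (a - b) /
        ((1 + (starRingEnd ℂ) α * a) * (1 + (starRingEnd ℂ) α * b)) := by
    simp only [hT]; rw [div_sub_div _ _ hane hbne]; congr 1; ring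
  have hTza : T z - T a =
      u * (1 - (starRingEnd ℂ) α * α) * (z - a) /
        ((1 + (starRingEnd ℂ) α * z) * (1 + (starRingEnd ℂ) α * a)) := by
    simp only [hT]; rw [div_sub_div _ _ hzne hane]; congr 1; ring
  have hTzb : T z - T b =
      u * (1 - (starRingEnd ℂ) α * α) * (z - b) /
        ((1 + (starRingEnd ℂ) α * z) * (1 + (starRingEnd ℂ) α * b)) := by
    simp only [hT]; rw [div_sub_div _ _ hzne hbne]; congr 1; ring
  rw [hderiv, hTab, hTza, hTzb]
  field_simp
end

section
/- For ℓ = ⟨a,b⟩ a geodesic of the unit disk that intersects the closed hyperbolic disk of center 0 and radius D₀, one has 1/|a−b| ≤ 2·cosh(D₀), and hence |ẽ_z(ℓ)| = |(z−a)(z−b)|/|a−b| ≤ 8·cosh(D₀) for every z ∈ S¹. -/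
/-- The hyperbolic geodesic of the unit disk with ideal endpoints `a, b` on the unit
circle: the circular arc (or diameter) through `a` and `b` orthogonal to the unit
circle. -/
def geoDisk (a b : ℂ) : Set ℂ :=
  {w | ‖w‖ < 1 ∧
    ((starRingEnd ℂ) a * b).im * (‖w‖ ^ 2 + 1) =
      -2 * (((starRingEnd ℂ) b - (starRingEnd ℂ) a) * w).im}

private lemma eTilde_aux1 (x1 x2 y1 y2 : ℝ) (ha : x1 ^ 2 + x2 ^ 2 = 1)
    (hb : y1 ^ 2 + y2 ^ 2 = 1) :
    4 * (x1 * y2 - x2 * y1) ^ 2 =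
      ((x1 - y1) ^ 2 + (x2 - y2) ^ 2) * (4 - ((x1 - y1) ^ 2 + (x2 - y2) ^ 2)) := by
  linear_combination
    (4 - 4 * (x1 * y1 + x2 * y2) + (x1 ^ 2 + x2 ^ 2 - 1) + 3 * (y1 ^ 2 + y2 ^ 2 - 1)) * ha +
    (4 - 4 * (x1 * y1 + x2 * y2) + 3 * (x1 ^ 2 + x2 ^ 2 - 1) + (y1 ^ 2 + y2 ^ 2 - 1)) * hb

private lemma eTilde_aux2 (s t p q : ℝ) (hs0 : 0 < s) (ht0 : 0 ≤ t) (ht1 : t < 1)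
    (hp0 : 0 ≤ p) (hq1 : 1 ≤ q) (hpq : q ^ 2 - p ^ 2 = 1) (htq : t * q ≤ p)
    (hkey : (4 - s ^ 2) * (1 + t ^ 2) ^ 2 ≤ 16 * t ^ 2) :
    2 ≤ s * (2 * q ^ 2 - 1) := by
  have hplq : p < q := by nlinarith
  have hpt : p * t ≤ q := by nlinarith
  have hmon : t * (q ^ 2 + p ^ 2) ≤ p * q * (1 + t ^ 2) := by
    nlinarith [mul_nonneg (sub_nonneg.mpr htq) (sub_nonneg.mpr hpt)]
  have hmon2 : t ^ 2 * (q ^ 2 + p ^ 2) ^ 2 ≤ (p * q) ^ 2 * (1 + t ^ 2) ^ 2 := by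
    have h0 : 0 ≤ t * (q ^ 2 + p ^ 2) := by positivity
    nlinarith [pow_le_pow_left₀ h0 hmon 2]
  have h2 : (4 - s ^ 2) * (q ^ 2 + p ^ 2) ^ 2 ≤ 16 * (p * q) ^ 2 := by
    have h4 : (4 - s ^ 2) * (q ^ 2 + p ^ 2) ^ 2 * (1 + t ^ 2) ^ 2
        ≤ 16 * (p * q) ^ 2 * (1 + t ^ 2) ^ 2 := by
      calc (4 - s ^ 2) * (q ^ 2 + p ^ 2) ^ 2 * (1 + t ^ 2) ^ 2
          = ((4 - s ^ 2) * (1 + t ^ 2) ^ 2) * (q ^ 2 + p ^ 2) ^ 2 := by ring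
        _ ≤ (16 * t ^ 2) * (q ^ 2 + p ^ 2) ^ 2 :=
            mul_le_mul_of_nonneg_right hkey (by positivity)
        _ = 16 * (t ^ 2 * (q ^ 2 + p ^ 2) ^ 2) := by ring
        _ ≤ 16 * ((p * q) ^ 2 * (1 + t ^ 2) ^ 2) := by linarith
        _ = 16 * (p * q) ^ 2 * (1 + t ^ 2) ^ 2 := by ring
    exact le_of_mul_le_mul_right h4 (by positivity)
  -- from (4 - s²)(q²+p²)² ≤ 16 p² q² and p² = q² - 1 conclude s²(2q²-1)² ≥ 4
  have hc1 : 1 ≤ 2 * q ^ 2 - 1 := by nlinarith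
  have hq2 : q ^ 2 + p ^ 2 = 2 * q ^ 2 - 1 := by linarith
  rw [hq2] at h2
  have hpq' : (p * q) ^ 2 = (q ^ 2 - 1) * q ^ 2 := by
    linear_combination (-q ^ 2) * hpq
  rw [hpq'] at h2
  have hsq : 4 ≤ (s * (2 * q ^ 2 - 1)) ^ 2 := by nlinarith [h2]
  nlinarith [hsq, mul_pos hs0 (lt_of_lt_of_le one_pos hc1)]

/-- If the geodesic `⟨a,b⟩` intersects the closed hyperbolic disk of center `0` and
radius `D₀` (Euclidean radius `tanh (D₀/2)`), then `1/|a-b| ≤ 2 cosh D₀`, hence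
`|ẽ_z(⟨a,b⟩)| = |(z-a)(z-b)/(a-b)| ≤ 8 cosh D₀` for every `z` on the unit circle. -/
theorem eTilde_bound_on_compact_part (D₀ : ℝ) (hD₀ : 0 ≤ D₀) (a b : ℂ)
    (ha : ‖a‖ = 1) (hb : ‖b‖ = 1) (hab : a ≠ b)
    (hmeet : ∃ w ∈ geoDisk a b, ‖w‖ ≤ Real.tanh (D₀ / 2)) :
    1 / ‖a - b‖ ≤ 2 * Real.cosh D₀ ∧
      ∀ z : ℂ, ‖z‖ = 1 → ‖(z - a) * (z - b) / (a - b)‖ ≤ 8 * Real.cosh D₀ := by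
  obtain ⟨w, ⟨hw1, hweq⟩, hwt⟩ := hmeet
  set s : ℝ := ‖a - b‖ with hs
  have hs0 : 0 < s := norm_pos_iff.mpr (sub_ne_zero.mpr hab)
  set t : ℝ := ‖w‖ with ht
  have ht0 : 0 ≤ t := norm_nonneg w
  set I : ℝ := ((starRingEnd ℂ) a * b).im with hI
  -- coordinates
  have ha2 : a.re ^ 2 + a.im ^ 2 = 1 := by
    have h : ‖a‖ ^ 2 = 1 := by rw [ha]; norm_num
    rw [Complex.sq_norm, Complex.normSq_apply] at h
    nlinarith [h]
  have hb2 : b.re ^ 2 + b.im ^ 2 = 1 := by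
    have h : ‖b‖ ^ 2 = 1 := by rw [hb]; norm_num
    rw [Complex.sq_norm, Complex.normSq_apply] at h
    nlinarith [h]
  have hs2 : s ^ 2 = (a.re - b.re) ^ 2 + (a.im - b.im) ^ 2 := by
    rw [hs, Complex.sq_norm, Complex.normSq_apply]
    simp only [Complex.sub_re, Complex.sub_im]
    ring
  have hIv : I = a.re * b.im - a.im * b.re := by
    rw [hI]; simp [Complex.mul_im]; ring
  -- key identity : 4 I² = s²(4 - s²)
  have hB : 4 * I ^ 2 = s ^ 2 * (4 - s ^ 2) := by
    rw [hIv, hs2]; exact eTilde_aux1 a.re a.im b.re b.im ha2 hb2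
  -- bound from the geodesic equation
  have hv : |(((starRingEnd ℂ) b - (starRingEnd ℂ) a) * w).im| ≤ s * t := by
    calc |(((starRingEnd ℂ) b - (starRingEnd ℂ) a) * w).im|
        ≤ ‖((starRingEnd ℂ) b - (starRingEnd ℂ) a) * w‖ := Complex.abs_im_le_norm _
      _ = ‖(starRingEnd ℂ) (b - a)‖ * ‖w‖ := by rw [← map_sub, norm_mul]
      _ = s * t := by rw [RCLike.norm_conj, norm_sub_rev]
  have hA2 : I ^ 2 * (1 + t ^ 2) ^ 2 ≤ 4 * (s ^ 2 * t ^ 2) := by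
    set V : ℝ := (((starRingEnd ℂ) b - (starRingEnd ℂ) a) * w).im with hV
    have h1 : I ^ 2 * (1 + t ^ 2) ^ 2 = 4 * V ^ 2 := by
      linear_combination (I * (t ^ 2 + 1) - 2 * V) * hweq
    have h2 : V ^ 2 ≤ (s * t) ^ 2 := by
      have h3 := pow_le_pow_left₀ (abs_nonneg V) hv 2
      rwa [sq_abs] at h3
    rw [h1]
    nlinarith [h2]
  -- (4 - s²)(1+t²)² ≤ 16 t²
  have hkey : (4 - s ^ 2) * (1 + t ^ 2) ^ 2 ≤ 16 * t ^ 2 := by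
    have h1 : s ^ 2 * ((4 - s ^ 2) * (1 + t ^ 2) ^ 2) ≤ s ^ 2 * (16 * t ^ 2) := by
      have hB' : s ^ 2 * ((4 - s ^ 2) * (1 + t ^ 2) ^ 2) = 4 * (I ^ 2 * (1 + t ^ 2) ^ 2) := by
        linear_combination (1 + t ^ 2) ^ 2 * hB.symm
      rw [hB']; linarith
    exact le_of_mul_le_mul_left h1 (by positivity)
  -- hyperbolic quantities
  set p : ℝ := Real.sinh (D₀ / 2) with hp
  set q : ℝ := Real.cosh (D₀ / 2) with hq
  have hp0 : 0 ≤ p := Real.sinh_nonneg_iff.mpr (by linarith)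
  have hq1 : 1 ≤ q := Real.one_le_cosh _
  have hpq : q ^ 2 - p ^ 2 = 1 := Real.cosh_sq_sub_sinh_sq _
  have hc : Real.cosh D₀ = 2 * q ^ 2 - 1 := by
    have hD : D₀ = 2 * (D₀ / 2) := by ring
    rw [hD, Real.cosh_two_mul, hq]
    have h := Real.cosh_sq_sub_sinh_sq (D₀ / 2)
    linarith
  have hc1 : 1 ≤ Real.cosh D₀ := Real.one_le_cosh _
  have htq : t * q ≤ p := by
    have hT : Real.tanh (D₀ / 2) = p / q := Real.tanh_eq_sinh_div_cosh _
    rw [hT] at hwt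
    calc t * q ≤ (p / q) * q := mul_le_mul_of_nonneg_right hwt (by linarith)
      _ = p := by field_simp
  -- the main bound : s cosh D₀ ≥ 2
  have hsc : 2 ≤ s * Real.cosh D₀ := by
    rw [hc]
    exact eTilde_aux2 s t p q hs0 ht0 hw1 hp0 hq1 hpq htq hkey
  constructor
  · rw [div_le_iff₀ hs0]
    linarith [hsc]
  · intro z hz
    rw [norm_div, norm_mul, div_le_iff₀ hs0]
    have h1 : ‖z - a‖ ≤ 2 := by
      calc ‖z - a‖ ≤ ‖z‖ + ‖a‖ := norm_sub_le _ _
        _ = 2 := by rw [hz, ha]; norm_num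
    have h2 : ‖z - b‖ ≤ 2 := by
      calc ‖z - b‖ ≤ ‖z‖ + ‖b‖ := norm_sub_le _ _
        _ = 2 := by rw [hz, hb]; norm_num
    calc ‖z - a‖ * ‖z - b‖ ≤ 2 * 2 :=
          mul_le_mul h1 h2 (norm_nonneg _) (by norm_num)
      _ ≤ 8 * Real.cosh D₀ * s := by linarith [hsc]
end

section
/- Fix D₀ ≥ 0 and z ∈ S¹, and let w_d = (tanh(d/2))·z be the point at hyperbolic distance d from 0 on the radius to z. If a geodesic ℓ intersects the hyperbolic D₀-neighborhood of w_d, then |ẽ_z(ℓ)| ≤ 8·cosh(D₀)·e^{−d}. -/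
/-- The hyperbolic (Poincaré) distance between two points of the unit disk. -/
noncomputable def hypDist (u v : ℂ) : ℝ :=
  Real.log ((1 + ‖(u - v) / (1 - (starRingEnd ℂ) v * u)‖) /
    (1 - ‖(u - v) / (1 - (starRingEnd ℂ) v * u)‖))

private lemma normSq_expand (x : ℂ) : ‖x‖ ^ 2 = x.re ^ 2 + x.im ^ 2 := by
  rw [Complex.sq_norm, Complex.normSq_apply]; ring

private lemma conj_mul_self {u : ℂ} (hu : ‖u‖ = 1) : (starRingEnd ℂ) u * u = 1 := by
  rw [mul_comm, Complex.mul_conj]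
  rw [Complex.normSq_eq_norm_sq, hu]
  norm_num

private lemma norm_one_sub_conj_mul (w : ℂ) {u : ℂ} (hu : ‖u‖ = 1) :
    ‖1 - (starRingEnd ℂ) w * u‖ = ‖u - w‖ := by
  have h : 1 - (starRingEnd ℂ) w * u = (starRingEnd ℂ) (u - w) * u := by
    rw [map_sub, sub_mul, conj_mul_self hu]
  rw [h, norm_mul, RCLike.norm_conj, hu, mul_one]

private lemma one_sub_conj_mul_self (w : ℂ) :
    1 - (starRingEnd ℂ) w * w = ((1 - ‖w‖ ^ 2 : ℝ) : ℂ) := by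
  rw [mul_comm, Complex.mul_conj, Complex.normSq_eq_norm_sq]
  push_cast
  ring

private lemma norm_one_sub_conj_mul_self {w : ℂ} (hw : ‖w‖ < 1) :
    ‖1 - (starRingEnd ℂ) w * w‖ = 1 - ‖w‖ ^ 2 := by
  rw [one_sub_conj_mul_self, Complex.norm_real, Real.norm_of_nonneg]
  nlinarith [norm_nonneg w]

private lemma normSq_moebius (w v : ℂ) :
    ‖1 - (starRingEnd ℂ) v * w‖ ^ 2 - ‖w - v‖ ^ 2 = (1 - ‖w‖ ^ 2) * (1 - ‖v‖ ^ 2) := by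
  simp only [normSq_expand, Complex.sub_re, Complex.sub_im, Complex.mul_re, Complex.mul_im,
    Complex.one_re, Complex.one_im, Complex.conj_re, Complex.conj_im]
  ring

/-- From membership in the geodesic circle, derive the complex "antipodal" relation. -/
private lemma geo_E {a b w : ℂ} (ha : ‖a‖ = 1) (hb : ‖b‖ = 1) (hab : a ≠ b)
    (hgeo : ((starRingEnd ℂ) a * b).im * (‖w‖ ^ 2 + 1) =
      -2 * (((starRingEnd ℂ) b - (starRingEnd ℂ) a) * w).im) :
    (a - w) * (1 - (starRingEnd ℂ) w * b) + (b - w) * (1 - (starRingEnd ℂ) w * a) = 0 := by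
  have ha' : a.re ^ 2 + a.im ^ 2 = 1 := by
    have h := (normSq_expand a).symm; rw [ha] at h; simpa using h
  have ha0 : a ≠ 0 := by intro h; rw [h] at ha; simp at ha
  have hb0 : b ≠ 0 := by intro h; rw [h] at hb; simp at hb
  set E := (a - w) * (1 - (starRingEnd ℂ) w * b) + (b - w) * (1 - (starRingEnd ℂ) w * a)
    with hEdef
  -- imaginary part of conj a * E vanishes
  have h1 : ((starRingEnd ℂ) a * E).im = 0 := by
    rw [normSq_expand w] at hgeo
    simp only [hEdef, Complex.mul_im, Complex.mul_re, Complex.sub_re, Complex.sub_im,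
      Complex.add_re, Complex.add_im, Complex.one_re, Complex.one_im,
      Complex.conj_re, Complex.conj_im] at hgeo ⊢
    linear_combination hgeo + (2 * (b.re * w.im - b.im * w.re)) * ha'
  -- conjugation relation
  have hai : (starRingEnd ℂ) a = a⁻¹ := eq_inv_of_mul_eq_one_left (conj_mul_self ha)
  have hbi : (starRingEnd ℂ) b = b⁻¹ := eq_inv_of_mul_eq_one_left (conj_mul_self hb)
  have h2 : (starRingEnd ℂ) E = (starRingEnd ℂ) a * (starRingEnd ℂ) b * E := by
    rw [hEdef]
    simp only [map_add, map_mul, map_sub, map_one, Complex.conj_conj, hai, hbi]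
    field_simp
    ring
  have key : (starRingEnd ℂ) b * E = (starRingEnd ℂ) a * E := by
    have hreal : (starRingEnd ℂ) ((starRingEnd ℂ) a * E) = (starRingEnd ℂ) a * E :=
      Complex.conj_eq_iff_im.mpr h1
    calc (starRingEnd ℂ) b * E
        = a * ((starRingEnd ℂ) a * (starRingEnd ℂ) b * E) := by
          rw [← mul_assoc, ← mul_assoc, mul_comm a ((starRingEnd ℂ) a),
            conj_mul_self ha, one_mul]
      _ = a * (starRingEnd ℂ) E := by rw [← h2]
      _ = (starRingEnd ℂ) ((starRingEnd ℂ) a * E) := by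
          rw [map_mul, Complex.conj_conj]
      _ = (starRingEnd ℂ) a * E := hreal
  have hba : (starRingEnd ℂ) b - (starRingEnd ℂ) a ≠ 0 := by
    rw [sub_ne_zero]
    exact fun h => hab ((starRingEnd ℂ).injective h).symm
  have h4 : ((starRingEnd ℂ) b - (starRingEnd ℂ) a) * E = 0 := by
    rw [sub_mul, key, sub_self]
  exact (mul_eq_zero.mp h4).resolve_left hba

/-- Main geometric bound: if `w` lies on the geodesic `⟨a,b⟩`, then
`|ẽ_z(⟨a,b⟩)| ≤ ‖z-w‖²/(1-‖w‖²)`. -/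
private lemma eTilde_bound {z a b w : ℂ} (hz : ‖z‖ = 1) (ha : ‖a‖ = 1) (hb : ‖b‖ = 1)
    (hab : a ≠ b) (hw1 : ‖w‖ < 1)
    (hE : (a - w) * (1 - (starRingEnd ℂ) w * b) + (b - w) * (1 - (starRingEnd ℂ) w * a) = 0) :
    ‖(z - a) * (z - b) / (a - b)‖ ≤ ‖z - w‖ ^ 2 / (1 - ‖w‖ ^ 2) := by
  set c := (starRingEnd ℂ) w with hc
  have hX : 0 < 1 - ‖w‖ ^ 2 := by nlinarith [norm_nonneg w]
  have I1 : (z - a) * (z - b) * (1 - c * w) ^ 2 =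
      (z - w) ^ 2 * (1 - c * a) * (1 - c * b) + (a - w) * (b - w) * (1 - c * z) ^ 2 := by
    linear_combination (-(z - w) * (1 - c * z)) * hE
  have I2 : (a - b) * (1 - c * w) = 2 * ((a - w) * (1 - c * b)) := by
    linear_combination -hE
  have n1 : ‖1 - c * a‖ = ‖a - w‖ := norm_one_sub_conj_mul w ha
  have n2 : ‖1 - c * b‖ = ‖b - w‖ := norm_one_sub_conj_mul w hb
  have n3 : ‖1 - c * z‖ = ‖z - w‖ := norm_one_sub_conj_mul w hz
  have n4 : ‖1 - c * w‖ = 1 - ‖w‖ ^ 2 := norm_one_sub_conj_mul_self hw1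
  have B1 : ‖z - a‖ * ‖z - b‖ * (1 - ‖w‖ ^ 2) ^ 2 ≤
      2 * (‖z - w‖ ^ 2 * (‖a - w‖ * ‖b - w‖)) := by
    calc ‖z - a‖ * ‖z - b‖ * (1 - ‖w‖ ^ 2) ^ 2
        = ‖(z - a) * (z - b) * (1 - c * w) ^ 2‖ := by
          rw [norm_mul, norm_mul, norm_pow, n4]
      _ = ‖(z - w) ^ 2 * (1 - c * a) * (1 - c * b) + (a - w) * (b - w) * (1 - c * z) ^ 2‖ := by
          rw [I1]
      _ ≤ ‖(z - w) ^ 2 * (1 - c * a) * (1 - c * b)‖ + ‖(a - w) * (b - w) * (1 - c * z) ^ 2‖ :=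
          norm_add_le _ _
      _ = 2 * (‖z - w‖ ^ 2 * (‖a - w‖ * ‖b - w‖)) := by
          rw [norm_mul, norm_mul, norm_pow, norm_mul, norm_mul, norm_pow, n1, n2, n3]
          ring
  have B2 : ‖a - b‖ * (1 - ‖w‖ ^ 2) = 2 * (‖a - w‖ * ‖b - w‖) := by
    have h := congrArg norm I2
    rw [norm_mul, n4, norm_mul, norm_mul, n2] at h
    simpa using h
  have hab' : (0:ℝ) < ‖a - b‖ := by
    rw [norm_pos_iff]; exact sub_ne_zero.mpr hab
  rw [norm_div, norm_mul, div_le_div_iff₀ hab' hX]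
  nlinarith [B1, B2, hX, norm_nonneg (z - a), norm_nonneg (z - b), norm_nonneg (z - w),
    norm_nonneg (a - w), norm_nonneg (b - w), sq_nonneg (‖z - w‖)]

set_option maxHeartbeats 1600000 in
/-- Decay of `ẽ_z`: if a geodesic `⟨a,b⟩` meets the hyperbolic `D₀`-neighborhood of the
point `w_d = tanh(d/2)·z` at hyperbolic distance `d` from `0` on the radius to `z`,
then `|ẽ_z(⟨a,b⟩)| ≤ 8 cosh(D₀) e^{-d}`. -/
theorem eTilde_decay (D₀ d : ℝ) (hD₀ : 0 ≤ D₀) (hd : 0 ≤ d)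
    (z a b : ℂ) (hz : ‖z‖ = 1) (ha : ‖a‖ = 1) (hb : ‖b‖ = 1) (hab : a ≠ b)
    (hmeet : ∃ w ∈ geoDisk a b, hypDist w ((Real.tanh (d / 2) : ℂ) * z) ≤ D₀) :
    ‖(z - a) * (z - b) / (a - b)‖ ≤ 8 * Real.cosh D₀ * Real.exp (-d) := by
  obtain ⟨w, hwmem, hwd⟩ := hmeet
  obtain ⟨hw1, hw2⟩ := hwmem
  have hE := geo_E ha hb hab hw2
  have hB := eTilde_bound hz ha hb hab hw1 hE
  -- basic facts about s = tanh(d/2)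
  set s : ℝ := Real.tanh (d / 2) with hsdef
  have hch : 0 < Real.cosh (d / 2) := Real.cosh_pos (d / 2)
  have hsh : 0 ≤ Real.sinh (d / 2) := Real.sinh_nonneg_iff.mpr (by linarith)
  have hs0 : 0 ≤ s := by
    rw [hsdef, Real.tanh_eq_sinh_div_cosh]; positivity
  have hs1 : s < 1 := by
    rw [hsdef, Real.tanh_eq_sinh_div_cosh, div_lt_one hch]
    nlinarith [Real.cosh_sub_sinh (d / 2), Real.exp_pos (-(d / 2))]
  set v : ℂ := ((s : ℝ) : ℂ) * z with hvdef
  have hnv : ‖v‖ = s := by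
    rw [hvdef, norm_mul, Complex.norm_real, hz, mul_one, Real.norm_of_nonneg hs0]
  have hnzv : ‖z - v‖ = 1 - s := by
    have : z - v = ((1 - s : ℝ) : ℂ) * z := by rw [hvdef]; push_cast; ring
    rw [this, norm_mul, Complex.norm_real, hz, mul_one, Real.norm_of_nonneg (by linarith)]
  have hY : 0 < 1 - s ^ 2 := by nlinarith
  have hX : 0 < 1 - ‖w‖ ^ 2 := by nlinarith [norm_nonneg w]
  -- pieces for the Busemann estimate
  set Dd : ℂ := 1 - (starRingEnd ℂ) v * w with hDdef
  set q : ℂ := w - v with hqdef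
  have hPM : ‖Dd‖ ^ 2 - ‖q‖ ^ 2 = (1 - ‖w‖ ^ 2) * (1 - s ^ 2) := by
    rw [hDdef, hqdef, normSq_moebius w v, hnv]
  have hq_lt : ‖q‖ < ‖Dd‖ := by
    nlinarith [norm_nonneg q, norm_nonneg Dd, hPM, mul_pos hX hY]
  have hDd0 : 0 < ‖Dd‖ := lt_of_le_of_lt (norm_nonneg q) hq_lt
  -- the triangle inequality step
  have h1 : ‖z - w‖ * (1 - s ^ 2) ≤ (‖Dd‖ + ‖q‖) * (1 - s) := by
    have hid : (z - w) * (1 - (starRingEnd ℂ) v * v) =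
        (z - v) * Dd - (w - v) * (1 - (starRingEnd ℂ) v * z) := by
      rw [hDdef]; ring
    have hnorm1 : ‖1 - (starRingEnd ℂ) v * v‖ = 1 - ‖v‖ ^ 2 :=
      norm_one_sub_conj_mul_self (by rw [hnv]; linarith)
    have hnorm2 : ‖1 - (starRingEnd ℂ) v * z‖ = ‖z - v‖ := norm_one_sub_conj_mul v hz
    calc ‖z - w‖ * (1 - s ^ 2)
        = ‖(z - w) * (1 - (starRingEnd ℂ) v * v)‖ := by
          rw [norm_mul, hnorm1, hnv]
      _ = ‖(z - v) * Dd - (w - v) * (1 - (starRingEnd ℂ) v * z)‖ := by rw [hid]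
      _ ≤ ‖(z - v) * Dd‖ + ‖(w - v) * (1 - (starRingEnd ℂ) v * z)‖ := norm_sub_le _ _
      _ = (‖Dd‖ + ‖q‖) * (1 - s) := by
          rw [norm_mul, norm_mul, hnorm2, hnzv, hqdef]; ring
  -- hypDist bound gives the ratio bound
  have hP : ‖Dd‖ + ‖q‖ ≤ Real.exp D₀ * (‖Dd‖ - ‖q‖) := by
    have ht : ‖q / Dd‖ = ‖q‖ / ‖Dd‖ := norm_div q Dd
    have htlt : ‖q / Dd‖ < 1 := by rw [ht, div_lt_one hDd0]; exact hq_lt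
    have ht0 : 0 ≤ ‖q / Dd‖ := norm_nonneg _
    have hpos : 0 < (1 + ‖q / Dd‖) / (1 - ‖q / Dd‖) := by
      apply div_pos <;> linarith
    have hlog : (1 + ‖q / Dd‖) / (1 - ‖q / Dd‖) ≤ Real.exp D₀ := by
      rw [← Real.log_le_iff_le_exp hpos]
      have : hypDist w v = Real.log ((1 + ‖q / Dd‖) / (1 - ‖q / Dd‖)) := by
        rw [hypDist, hqdef, hDdef, div_eq_mul_inv]
      rw [← this]
      exact hwd
    rw [div_le_iff₀ (by linarith)] at hlog
    rw [ht] at hlog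
    have := mul_le_mul_of_nonneg_left hlog (le_of_lt hDd0)
    have hqq : ‖Dd‖ * (‖q‖ / ‖Dd‖) = ‖q‖ := by
      rw [mul_comm, div_mul_cancel₀ _ hDd0.ne']
    calc ‖Dd‖ + ‖q‖ = ‖Dd‖ * (1 + ‖q‖ / ‖Dd‖) := by linear_combination -hqq
      _ ≤ ‖Dd‖ * (Real.exp D₀ * (1 - ‖q‖ / ‖Dd‖)) := this
      _ = Real.exp D₀ * (‖Dd‖ - ‖q‖) := by linear_combination (-(Real.exp D₀)) * hqq
  -- the tanh identity
  have h4 : (1 - s) ^ 2 = Real.exp (-d) * (1 - s ^ 2) := by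
    set ch : ℝ := Real.cosh (d / 2)
    set sh : ℝ := Real.sinh (d / 2)
    have hA : (1 - s) * ch = Real.exp (-(d / 2)) := by
      rw [← Real.cosh_sub_sinh (d / 2), hsdef, Real.tanh_eq_sinh_div_cosh]
      field_simp
      rfl
    have hBp : (1 + s) * ch = Real.exp (d / 2) := by
      rw [← Real.cosh_add_sinh (d / 2), hsdef, Real.tanh_eq_sinh_div_cosh]
      field_simp
      rfl
    have e1 : Real.exp (-(d / 2)) * Real.exp (-(d / 2)) = Real.exp (-d) := by
      rw [← Real.exp_add]; ring_nf
    have e2 : Real.exp (-(d / 2)) * Real.exp (d / 2) = 1 := by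
      rw [← Real.exp_add]; simp
    have hmain : ch ^ 2 * ((1 - s) ^ 2) = ch ^ 2 * (Real.exp (-d) * (1 - s ^ 2)) := by
      calc ch ^ 2 * ((1 - s) ^ 2) = ((1 - s) * ch) * ((1 - s) * ch) := by ring
        _ = Real.exp (-(d / 2)) * Real.exp (-(d / 2)) := by rw [hA]
        _ = Real.exp (-d) := e1
        _ = Real.exp (-d) * (Real.exp (-(d / 2)) * Real.exp (d / 2)) := by rw [e2, mul_one]
        _ = Real.exp (-d) * (((1 - s) * ch) * ((1 + s) * ch)) := by rw [hA, hBp]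
        _ = ch ^ 2 * (Real.exp (-d) * (1 - s ^ 2)) := by ring
    exact mul_left_cancel₀ (by positivity) hmain
  -- assemble the Busemann estimate
  have hzw0 : (0:ℝ) ≤ ‖z - w‖ * (1 - s ^ 2) := mul_nonneg (norm_nonneg _) hY.le
  have s1 : (‖z - w‖ * (1 - s ^ 2)) * (‖z - w‖ * (1 - s ^ 2)) ≤
      ((‖Dd‖ + ‖q‖) * (1 - s)) * ((‖Dd‖ + ‖q‖) * (1 - s)) :=
    mul_le_mul h1 h1 hzw0 (le_trans hzw0 h1)
  have s2 : ‖z - w‖ ^ 2 * (1 - s ^ 2) ≤ (‖Dd‖ + ‖q‖) ^ 2 * Real.exp (-d) := by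
    nlinarith [s1, h4, hY, Real.exp_pos (-d), sq_nonneg (‖Dd‖ + ‖q‖)]
  have s3 : (‖Dd‖ + ‖q‖) ^ 2 * Real.exp (-d) ≤
      Real.exp D₀ * Real.exp (-d) * ((1 - ‖w‖ ^ 2) * (1 - s ^ 2)) := by
    have hPpos : 0 ≤ ‖Dd‖ + ‖q‖ := add_nonneg (norm_nonneg _) (norm_nonneg _)
    have hPP : (‖Dd‖ + ‖q‖) ^ 2 ≤ Real.exp D₀ * ((1 - ‖w‖ ^ 2) * (1 - s ^ 2)) := by
      nlinarith [mul_le_mul_of_nonneg_right hP hPpos, hPM, Real.exp_pos D₀]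
    have := mul_le_mul_of_nonneg_right hPP (Real.exp_pos (-d)).le
    linarith [this]
  have s4 : ‖z - w‖ ^ 2 ≤ Real.exp D₀ * Real.exp (-d) * (1 - ‖w‖ ^ 2) := by
    nlinarith [s2, s3, hY, hX, Real.exp_pos (-d), Real.exp_pos D₀]
  have hC : ‖z - w‖ ^ 2 / (1 - ‖w‖ ^ 2) ≤ Real.exp D₀ * Real.exp (-d) := by
    rw [div_le_iff₀ hX]
    linarith
  have hcosh : Real.exp D₀ ≤ 2 * Real.cosh D₀ := by
    rw [Real.cosh_eq]
    nlinarith [Real.exp_pos (-D₀)]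
  calc ‖(z - a) * (z - b) / (a - b)‖ ≤ ‖z - w‖ ^ 2 / (1 - ‖w‖ ^ 2) := hB
    _ ≤ Real.exp D₀ * Real.exp (-d) := hC
    _ ≤ 8 * Real.cosh D₀ * Real.exp (-d) := by
        nlinarith [Real.exp_pos (-d), hcosh, Real.cosh_pos (x := D₀), Real.exp_pos D₀]
end

section
/- For a bounded measured lamination λ on the unit disk and any z ∈ S¹ not in the closure of the fixed base stratum, the integral ∫_G ẽ_z(ℓ) dλ_{A,z}(ℓ) converges absolutely, where λ_{A,z} is the restriction of λ to the geodesics separating the base stratum A from z; in particular the infinitesimal earthquake Ė^λ(z) = ∫_G Ė^λ_ℓ(z) dλ(ℓ) is well-defined. -/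
open Set MeasureTheory

/-- The space of geodesics of the unit disk, identified with pairs of points of the
unit circle (the ideal endpoints). -/
def GeodD := {p : ℂ × ℂ // ‖p.1‖ = 1 ∧ ‖p.2‖ = 1}

noncomputable instance : MeasurableSpace GeodD := by unfold GeodD; infer_instance

/-- The set of geodesics crossing (intersecting) a subset `A` of the disk. -/
def crossD (A : Set ℂ) : Set GeodD := {g | (geoDisk g.1.1 g.1.2 ∩ A).Nonempty}

/-- A geodesic arc of unit hyperbolic length in the disk. -/
def IsUnitArcD (A : Set ℂ) : Prop :=
  ∃ g : ℝ → ℂ, (∀ s ∈ Icc (0:ℝ) 1, ‖g s‖ < 1) ∧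
    (∀ s ∈ Icc (0:ℝ) 1, ∀ t ∈ Icc (0:ℝ) 1, hypDist (g s) (g t) = |s - t|) ∧
    A = g '' Icc 0 1

/-- Masses of unit arcs; the Thurston norm is the supremum of this set. -/
def thSetD (μ : Measure GeodD) : Set ℝ :=
  {r | ∃ A, IsUnitArcD A ∧ r = (μ (crossD A)).toReal}

/-- A measured lamination: supported on a set of pairwise disjoint geodesics. -/
def IsLamD (μ : Measure GeodD) : Prop :=
  ∃ S : Set GeodD, μ Sᶜ = 0 ∧ (∀ g ∈ S, g.1.1 ≠ g.1.2) ∧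
    (∀ g ∈ S, ∀ g' ∈ S,
      geoDisk g.1.1 g.1.2 = geoDisk g'.1.1 g'.1.2 ∨
        Disjoint (geoDisk g.1.1 g.1.2) (geoDisk g'.1.1 g'.1.2))

/-- Boundedness of a measured lamination (finite Thurston norm). -/
def IsBoundedLamD (μ : Measure GeodD) : Prop :=
  IsLamD μ ∧ BddAbove (thSetD μ) ∧ ∀ A, IsUnitArcD A → μ (crossD A) ≠ ⊤

/-- `|ẽ_z|` as a function on the space of geodesics. -/
noncomputable def eAbs (z : ℂ) (g : GeodD) : ℝ :=
  ‖(z - g.1.1) * (z - g.1.2) / (g.1.1 - g.1.2)‖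

/-! ### Auxiliary lemmas -/

lemma normsq_ri (x : ℂ) : ‖x‖^2 = x.re^2 + x.im^2 := by
  rw [Complex.sq_norm, Complex.normSq_apply]; ring

lemma key_id (u v : ℂ) :
    ‖1 - (starRingEnd ℂ) v * u‖^2 = ‖u - v‖^2 + (1-‖u‖^2)*(1-‖v‖^2) := by
  simp only [normsq_ri, Complex.sub_re, Complex.sub_im, Complex.mul_re, Complex.mul_im,
    Complex.one_re, Complex.one_im, Complex.conj_re, Complex.conj_im]
  ring

lemma geo_id {a b w : ℂ} (ha : ‖a‖ = 1) (hb : ‖b‖ = 1) (hab : a ≠ b)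
    (hw : w ∈ geoDisk a b) :
    4 * (‖w-a‖^2 * ‖w-b‖^2) = (1-‖w‖^2)^2 * ‖a-b‖^2 := by
  obtain ⟨hw1, hw2⟩ := hw
  set A := (starRingEnd ℂ) a with hA
  set B := (starRingEnd ℂ) b with hB
  set W := (starRingEnd ℂ) w with hWd
  have haC : A * a = 1 := by
    rw [hA, Complex.conj_mul', ha]; norm_num
  have hbC : B * b = 1 := by
    rw [hB, Complex.conj_mul', hb]; norm_num
  have ha0 : a ≠ 0 := by intro h; rw [h] at ha; simp at ha
  have hb0 : b ≠ 0 := by intro h; rw [h] at hb; simp at hb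
  have hsq2 : w * W = ((‖w‖ :ℂ))^2 := by
    rw [hWd, mul_comm, Complex.conj_mul']
  have c1 : (starRingEnd ℂ) (A*b) = a * B := by
    rw [hA, hB, map_mul, Complex.conj_conj]
  have c2 : (starRingEnd ℂ) ((B-A)*w) = (b-a)*W := by
    rw [hA, hB, hWd, map_mul, map_sub, Complex.conj_conj, Complex.conj_conj]
  have s1 : A*b - a*B = (2*(A*b).im : ℝ) * Complex.I := by
    rw [← c1]; exact_mod_cast Complex.sub_conj (A*b)
  have s2 : (B-A)*w - (b-a)*W = (2*((B-A)*w).im : ℝ) * Complex.I := by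
    rw [← c2]; exact_mod_cast Complex.sub_conj ((B-A)*w)
  have hr : ((A*b).im * (‖w‖^2+1) + 2*((B-A)*w).im : ℝ) = 0 := by
    rw [hA, hB] at *; linarith [hw2]
  have hr' : (((A*b).im :ℂ)) * (((‖w‖:ℂ))^2+1) + 2*(((B-A)*w).im : ℂ) = 0 := by
    exact_mod_cast congrArg (fun x : ℝ => (x : ℂ)) hr
  have hEC : (A*b - a*B)*(w*W+1) + 2*((B-A)*w - (b-a)*W) = 0 := by
    rw [s1, s2, hsq2]
    push_cast
    linear_combination (2*Complex.I) * hr'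
  have hQ : 2*w + 2*a*b*W - (a+b)*(w*W+1) = 0 := by
    have key : (a-b) * (2*w + 2*a*b*W - (a+b)*(w*W+1)) = 0 := by
      linear_combination (a*b)*hEC + (-(b^2*(w*W+1)) + 2*b*w)*haC + (-(2*a*w) + a^2*(w*W+1))*hbC
    rcases mul_eq_zero.1 key with h | h
    · exact absurd (sub_eq_zero.1 h) hab
    · exact h
  have n1 : ((‖w-a‖ :ℂ))^2 = (w-a)*(W-A) := by
    rw [← Complex.conj_mul' (w-a), map_sub]; ring
  have n2 : ((‖w-b‖ :ℂ))^2 = (w-b)*(W-B) := by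
    rw [← Complex.conj_mul' (w-b), map_sub]; ring
  have n3 : ((‖a-b‖ :ℂ))^2 = (a-b)*(A-B) := by
    rw [← Complex.conj_mul' (a-b), map_sub]; ring
  have hfin : ((4 * (‖w-a‖^2 * ‖w-b‖^2) : ℝ) : ℂ) = (((1-‖w‖^2)^2 * ‖a-b‖^2 : ℝ) : ℂ) := by
    push_cast
    rw [n1, n2, n3, ← hsq2]
    apply mul_left_cancel₀ (mul_ne_zero ha0 hb0)
    linear_combination (2*w + 2*a*b*W - (a+b)*(w*W+1)) * hQ
      + (-(4*(w-a)*(w-b)*(b*W-1)) + 4*(w-a)*(w-b)*(B*b-1) - (1-w*W)^2*(a-b)*b) * haC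
      + (-(4*(w-a)*(w-b)*(a*W-1)) + (1-w*W)^2*(a-b)*a) * hbC
  exact_mod_cast hfin

set_option maxHeartbeats 1000000 in
lemma ptBound {a b w : ℂ} (z : ℂ) (ha : ‖a‖ = 1) (hb : ‖b‖ = 1) (hab : a ≠ b)
    (hw : w ∈ geoDisk a b) :
    ‖(z - a) * (z - b) / (a - b)‖ ≤
      ‖z-w‖^2/(1-‖w‖) + 2*‖z-w‖ + (1-‖w‖^2) := by
  have hm1 : ‖w‖ < 1 := hw.1
  have hm0 : (0:ℝ) ≤ ‖w‖ := norm_nonneg w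
  have Gsq : 4 * (‖w-a‖^2 * ‖w-b‖^2) = (1-‖w‖^2)^2 * ‖a-b‖^2 := geo_id ha hb hab hw
  obtain ⟨X, P, Q, R, m, hX, hP, hQn, hR, hm⟩ :
      ∃ X P Q R m : ℝ, X = ‖z-w‖ ∧ P = ‖w-a‖ ∧ Q = ‖w-b‖ ∧ R = ‖a-b‖ ∧ m = ‖w‖ :=
    ⟨_, _, _, _, _, rfl, rfl, rfl, rfl, rfl⟩
  simp only [← hX, ← hP, ← hQn, ← hR, ← hm] at hm1 hm0 Gsq ⊢
  have hX0 : 0 ≤ X := by rw [hX]; exact norm_nonneg _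
  have hP0 : 0 ≤ P := by rw [hP]; exact norm_nonneg _
  have hQ0 : 0 ≤ Q := by rw [hQn]; exact norm_nonneg _
  have hR0 : 0 < R := by rw [hR]; exact norm_pos_iff.2 (sub_ne_zero.2 hab)
  have h1m : 0 < 1 - m := by linarith
  have h1m2 : 0 < 1 - m^2 := by nlinarith
  have G : 2 * (P*Q) = (1-m^2)*R := by
    have h2 : 0 ≤ 2*(P*Q) := by positivity
    have h3 : 0 ≤ (1-m^2)*R := le_of_lt (mul_pos h1m2 hR0)
    nlinarith [sq_nonneg (2*(P*Q) - (1-m^2)*R), sq_nonneg (2*(P*Q) + (1-m^2)*R)]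
  have hPl : 1 - m ≤ P := by
    have h := norm_sub_norm_le a w
    rw [norm_sub_rev, ← hP, ← hm, ha] at h; linarith
  have hQl : 1 - m ≤ Q := by
    have h := norm_sub_norm_le b w
    rw [norm_sub_rev, ← hQn, ← hm, hb] at h; linarith
  have hRl : 1 - m ≤ R := by
    nlinarith [G, mul_le_mul hPl hQl h1m.le hP0, hm0, hm1]
  have hPu : P ≤ R := by
    nlinarith [G, mul_le_mul_of_nonneg_left hQl hP0, mul_pos hR0 (mul_pos h1m h1m)]
  have hQu : Q ≤ R := by
    nlinarith [G, mul_le_mul_of_nonneg_left hPl hQ0, mul_pos hR0 (mul_pos h1m h1m)]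
  have e2 : ‖(z - a) * (z - b) / (a - b)‖ = ‖z-a‖ * ‖z-b‖ / R := by
    rw [norm_div, norm_mul, hR]
  rw [e2]
  have tza : ‖z-a‖ ≤ X + P := by
    have h : z - a = (z-w) + (w-a) := by ring
    rw [h, hX, hP]; exact norm_add_le _ _
  have tzb : ‖z-b‖ ≤ X + Q := by
    have h : z - b = (z-w) + (w-b) := by ring
    rw [h, hX, hQn]; exact norm_add_le _ _
  have step1 : ‖z-a‖ * ‖z-b‖ / R ≤ (X+P)*(X+Q)/R := by
    gcongr
  refine step1.trans ?_
  have key : (X+P)*(X+Q)*(1-m) ≤ (X^2 + 2*X*(1-m) + (1-m^2)*(1-m))*R := by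
    have t1 : X^2*((1-m)-R) ≤ 0 :=
      mul_nonpos_of_nonneg_of_nonpos (sq_nonneg X) (by linarith)
    have t2 : X*(1-m)*((P+Q)-2*R) ≤ 0 :=
      mul_nonpos_of_nonneg_of_nonpos (mul_nonneg hX0 h1m.le) (by linarith)
    have t3 : 0 ≤ P*Q*(1-m) := mul_nonneg (mul_nonneg hP0 hQ0) h1m.le
    have G1 : (1-m)*(2*(P*Q)) = (1-m)*((1-m^2)*R) := by rw [G]
    nlinarith [t1, t2, t3, G1]
  have step2 : (X+P)*(X+Q)/R ≤ (X^2 + 2*X*(1-m) + (1-m^2)*(1-m))/(1-m) := by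
    rw [div_le_div_iff₀ hR0 h1m]
    linarith [key]
  refine step2.trans (le_of_eq ?_)
  field_simp

lemma hyp_pack {u v : ℂ} (hu : ‖u‖ < 1) (hv : ‖v‖ < 1) :
    ∃ t D : ℝ, 0 ≤ t ∧ t < 1 ∧ 1 - ‖v‖ ≤ D ∧ D ≤ 2 ∧ 0 < D ∧
      D = ‖1 - (starRingEnd ℂ) v * u‖ ∧
      ‖u - v‖ = t * D ∧
      D^2 * (1 - t^2) = (1-‖u‖^2)*(1-‖v‖^2) ∧
      Real.exp (hypDist u v) * (1 - t) = 1 + t := by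
  have hu0 := norm_nonneg u
  have hv0 := norm_nonneg v
  set D := ‖1 - (starRingEnd ℂ) v * u‖ with hD
  have hDl : 1 - ‖v‖ ≤ D := by
    have h := norm_sub_norm_le (1:ℂ) ((starRingEnd ℂ) v * u)
    rw [norm_one, norm_mul, Complex.norm_conj] at h
    nlinarith [h, mul_le_of_le_one_right hv0 hu.le]
  have hD0 : 0 < D := by linarith
  have hDu : D ≤ 2 := by
    have h := norm_add_le (1:ℂ) (-((starRingEnd ℂ) v * u))
    rw [norm_one, norm_neg, norm_mul, Complex.norm_conj] at h
    have : ‖v‖ * ‖u‖ ≤ 1 := by nlinarith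
    calc D = ‖1 - (starRingEnd ℂ) v * u‖ := hD
      _ = ‖1 + -((starRingEnd ℂ) v * u)‖ := by rw [sub_eq_add_neg]
      _ ≤ 1 + ‖v‖ * ‖u‖ := by
          refine (norm_add_le _ _).trans ?_
          rw [norm_one, norm_neg, norm_mul, Complex.norm_conj]
      _ ≤ 2 := by linarith
  set t := ‖(u - v) / (1 - (starRingEnd ℂ) v * u)‖ with ht
  have ht' : t = ‖u - v‖ / D := by rw [ht, norm_div]
  have ht0 : 0 ≤ t := norm_nonneg _
  have hpos : 0 < (1-‖u‖^2)*(1-‖v‖^2) := by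
    have e1 : (1:ℝ)-‖u‖^2 = (1-‖u‖)*(1+‖u‖) := by ring
    have e2 : (1:ℝ)-‖v‖^2 = (1-‖v‖)*(1+‖v‖) := by ring
    rw [e1, e2]
    apply mul_pos <;> apply mul_pos <;> linarith
  have hkey := key_id u v
  have huvD : ‖u - v‖ < D := by
    nlinarith [norm_nonneg (u-v), hkey]
  have ht1 : t < 1 := by
    rw [ht']
    rw [div_lt_one hD0]
    exact huvD
  have htD : ‖u - v‖ = t * D := by
    rw [ht']; field_simp
  refine ⟨t, D, ht0, ht1, hDl, hDu, hD0, hD, htD, ?_, ?_⟩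
  · linear_combination hkey + (‖u - v‖ + t*D)*htD
  · have hfrac : 0 < (1+t)/(1-t) := by
      apply div_pos <;> linarith
    have : Real.exp (hypDist u v) = (1+t)/(1-t) := by
      rw [hypDist, Real.exp_log hfrac]
    rw [this]
    rw [div_mul_cancel₀]
    linarith

set_option maxHeartbeats 1000000 in
lemma ray_decay {f : ℝ → ℂ}
    (hin : ∀ s, 0 ≤ s → ‖f s‖ < 1)
    (hiso : ∀ s t, 0 ≤ s → 0 ≤ t → hypDist (f s) (f t) = |s - t|)
    {s : ℝ} (hs : 0 ≤ s) :
    1 - ‖f s‖^2 ≤ 16/(1-‖f 0‖^2) * Real.exp (-s) ∧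
      (1-‖f 0‖)/2 * Real.exp (-s) ≤ 1 - ‖f s‖^2 := by
  have hr0 : ‖f 0‖ < 1 := hin 0 le_rfl
  have hr00 : 0 ≤ ‖f 0‖ := norm_nonneg _
  have h1r2 : 0 < 1 - ‖f 0‖^2 := by nlinarith
  obtain ⟨t, D, ht0, ht1, hDl, hDu, hD0, hDdef, htD, hiden, hexp⟩ :=
    hyp_pack (hin s hs) (hin 0 le_rfl)
  have hds : hypDist (f s) (f 0) = s := by rw [hiso s 0 hs le_rfl, sub_zero, abs_of_nonneg hs]
  rw [hds] at hexp
  have hE1 : 1 ≤ Real.exp s := Real.one_le_exp hs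
  have hE0 : 0 < Real.exp s := Real.exp_pos s
  have hes : Real.exp (-s) = (Real.exp s)⁻¹ := Real.exp_neg s
  have h1t_low : Real.exp (-s) ≤ 1 - t := by
    rw [hes, inv_le_iff_one_le_mul₀ hE0]
    nlinarith [hexp]
  have h1t_up : 1 - t ≤ 2*Real.exp (-s) := by
    have h2 : 1 - t ≤ 2 / Real.exp s := by
      rw [le_div_iff₀ hE0]; nlinarith [hexp]
    rw [hes]
    simpa [div_eq_mul_inv] using h2
  have hfs1 : ‖f s‖ < 1 := hin s hs
  have hfs0 : 0 ≤ ‖f s‖ := norm_nonneg _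
  have hXnn : 0 ≤ 1 - ‖f s‖^2 := by nlinarith
  constructor
  · rw [div_mul_eq_mul_div, le_div_iff₀ h1r2]
    have m1 : (1-t)*(1+t) ≤ 4*Real.exp (-s) := by nlinarith [sq_nonneg (1-t), h1t_up]
    have hD4 : D^2 ≤ 4 := by nlinarith [hDu, hD0]
    have hprod0 : (0:ℝ) ≤ (1-t)*(1+t) := mul_nonneg (by linarith) (by linarith)
    have m2 : D^2*((1-t)*(1+t)) ≤ 4*(4*Real.exp (-s)) :=
      mul_le_mul hD4 m1 hprod0 (by norm_num)
    nlinarith [m2, hiden]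
  · have c0 : 0 < 1-‖f 0‖ := by linarith
    have hD2 : (1-‖f 0‖)^2 ≤ D^2 := by nlinarith
    have h1 : (1-‖f 0‖)^2 * Real.exp (-s) ≤ (1-‖f s‖^2)*(1-‖f 0‖^2) := by
      have e1 : Real.exp (-s) ≤ 1 - t^2 := by nlinarith
      have h2 := mul_le_mul hD2 e1 (Real.exp_pos (-s)).le (sq_nonneg D)
      calc (1-‖f 0‖)^2 * Real.exp (-s) ≤ D^2 * (1-t^2) := by linarith
        _ = (1-‖f s‖^2)*(1-‖f 0‖^2) := hiden
    have h2 : (1-‖f 0‖) * Real.exp (-s) ≤ (1-‖f s‖^2)*(1+‖f 0‖) := by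
      apply le_of_mul_le_mul_left _ c0
      calc (1-‖f 0‖)*((1-‖f 0‖)*Real.exp (-s)) = (1-‖f 0‖)^2*Real.exp (-s) := by ring
        _ ≤ (1-‖f s‖^2)*(1-‖f 0‖^2) := h1
        _ = (1-‖f 0‖)*((1-‖f s‖^2)*(1+‖f 0‖)) := by ring
    nlinarith [h2, mul_nonneg hXnn hr00]

set_option maxHeartbeats 1000000 in
lemma ray_step {f : ℝ → ℂ}
    (hin : ∀ s, 0 ≤ s → ‖f s‖ < 1)
    (hiso : ∀ s t, 0 ≤ s → 0 ≤ t → hypDist (f s) (f t) = |s - t|)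
    {u : ℝ} (hu : 0 ≤ u) :
    ‖f (u+1) - f u‖ ≤ (Real.exp 1 - 1)/2 * (1 - ‖f u‖^2) := by
  have hu1 : (0:ℝ) ≤ u + 1 := by linarith
  have hU := hin u hu
  have hV := hin (u+1) hu1
  obtain ⟨t, D, ht0, ht1, hDl, hDu, hD0, hDdef, htD, hiden, hexp⟩ := hyp_pack hU hV
  have hds : hypDist (f u) (f (u+1)) = 1 := by
    rw [hiso u (u+1) hu hu1]
    rw [abs_of_nonpos (by linarith)]; ring
  rw [hds] at hexp
  have hDb : D ≤ (1 - ‖f u‖^2) + ‖f u - f (u+1)‖ := by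
    have e1 : (1 : ℂ) - (starRingEnd ℂ) (f (u+1)) * (f u) =
        (1 - (starRingEnd ℂ) (f u) * (f u)) +
          ((starRingEnd ℂ) (f u) - (starRingEnd ℂ) (f (u+1))) * (f u) := by ring
    have e2 : ‖(1:ℂ) - (starRingEnd ℂ) (f u) * (f u)‖ = 1 - ‖f u‖^2 := by
      rw [Complex.conj_mul']
      have : ((1:ℂ) - (‖f u‖:ℂ)^2) = ((1 - ‖f u‖^2 : ℝ) : ℂ) := by push_cast; ring
      rw [this, Complex.norm_real, Real.norm_eq_abs,
        abs_of_nonneg (by nlinarith [norm_nonneg (f u)])]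
    have e3 : ‖((starRingEnd ℂ) (f u) - (starRingEnd ℂ) (f (u+1))) * (f u)‖ ≤ ‖f u - f (u+1)‖ := by
      rw [norm_mul, ← map_sub, Complex.norm_conj]
      exact mul_le_of_le_one_right (norm_nonneg _) hU.le
    calc D = ‖(1:ℂ) - (starRingEnd ℂ) (f (u+1)) * (f u)‖ := hDdef
      _ ≤ ‖(1:ℂ) - (starRingEnd ℂ) (f u) * (f u)‖ +
            ‖((starRingEnd ℂ) (f u) - (starRingEnd ℂ) (f (u+1))) * (f u)‖ := by
          rw [e1]; exact norm_add_le _ _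
      _ ≤ (1 - ‖f u‖^2) + ‖f u - f (u+1)‖ := by rw [e2]; linarith [e3]
  have hE := Real.exp_pos 1
  have hXle : ‖f u - f (u+1)‖ * (1-t) ≤ t * (1 - ‖f u‖^2) := by
    have h3 := mul_le_mul_of_nonneg_left hDb ht0
    nlinarith [h3, htD]
  have ht2 : t = (Real.exp 1 - 1)/2 * (1-t) := by
    field_simp
    linarith [hexp]
  have h1t : 0 < 1 - t := by linarith
  have := hXle
  rw [ht2] at this
  calc ‖f (u+1) - f u‖ = ‖f u - f (u+1)‖ := by rw [norm_sub_rev]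
    _ ≤ (Real.exp 1 - 1)/2 * (1 - ‖f u‖^2) := by
        apply le_of_mul_le_mul_right _ h1t
        nlinarith [this]

set_option maxHeartbeats 1000000 in
lemma ray_tail {f : ℝ → ℂ} {z : ℂ}
    (hin : ∀ s, 0 ≤ s → ‖f s‖ < 1)
    (hiso : ∀ s t, 0 ≤ s → 0 ≤ t → hypDist (f s) (f t) = |s - t|)
    (hlim : Filter.Tendsto f Filter.atTop (nhds z))
    {s : ℝ} (hs : 0 ≤ s) :
    ‖z - f s‖ ≤ (Real.exp 1 * (16/(1-‖f 0‖^2)) / 2) * Real.exp (-s) := by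
  have hr0 : ‖f 0‖ < 1 := hin 0 le_rfl
  have h1r2 : 0 < 1 - ‖f 0‖^2 := by nlinarith [norm_nonneg (f 0)]
  set Cu := 16/(1-‖f 0‖^2) with hCu
  have hCu0 : 0 < Cu := by positivity
  set c := (Real.exp 1 - 1)/2 * Cu with hc
  have hc0 : 0 < c := by
    have h1 : (1:ℝ) < Real.exp 1 := by nlinarith [Real.add_one_le_exp (1:ℝ)]
    exact mul_pos (by linarith) hCu0
  set g : ℕ → ℂ := fun n => f (s + n) with hg
  have hgl : Filter.Tendsto g Filter.atTop (nhds z) := by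
    apply hlim.comp
    exact Filter.tendsto_atTop_add_const_left _ s tendsto_natCast_atTop_atTop
  set d : ℕ → ℝ := fun n => (c * Real.exp (-s)) * (Real.exp (-1))^n with hd
  have hstep : ∀ n : ℕ, dist (g n) (g (n+1)) ≤ d n := by
    intro n
    have hsn : 0 ≤ s + n := by positivity
    have e1 : dist (g n) (g (n+1)) = ‖f ((s+n)+1) - f (s+n)‖ := by
      rw [dist_eq_norm, hg, norm_sub_rev]
      norm_num
      ring_nf
    rw [e1]
    refine (ray_step hin hiso hsn).trans ?_
    have h2 := (ray_decay hin hiso hsn).1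
    have e2 : Real.exp (-(s+n)) = Real.exp (-s) * (Real.exp (-1))^n := by
      rw [← Real.exp_nat_mul, ← Real.exp_add]; ring_nf
    rw [← hCu] at h2
    have e3 : 0 ≤ (Real.exp 1 - 1)/2 := by
      have := Real.one_le_exp (by norm_num : (0:ℝ) ≤ 1); linarith
    calc (Real.exp 1 - 1)/2 * (1 - ‖f (s+n)‖^2)
        ≤ (Real.exp 1 - 1)/2 * (Cu * Real.exp (-(s+n))) := by
          apply mul_le_mul_of_nonneg_left h2 e3
      _ = d n := by rw [hd, e2]; ring
  have hsum : Summable d := by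
    apply Summable.mul_left
    apply summable_geometric_of_lt_one (Real.exp_nonneg _)
    rw [Real.exp_lt_one_iff]; norm_num
  have htsum : dist (g 0) z ≤ tsum d :=
    dist_le_tsum_of_dist_le_of_tendsto₀ d hstep hsum hgl
  have hg0 : g 0 = f s := by rw [hg]; norm_num
  have htsv : tsum d = (c * Real.exp (-s)) * (1 - Real.exp (-1))⁻¹ := by
    rw [hd, tsum_mul_left, tsum_geometric_of_lt_one (Real.exp_nonneg _)
      (by rw [Real.exp_lt_one_iff]; norm_num)]
  rw [hg0, dist_eq_norm, norm_sub_rev] at htsum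
  refine htsum.trans ?_
  rw [htsv]
  have hE1 : Real.exp (-1) < 1 := by rw [Real.exp_lt_one_iff]; norm_num
  have he : (1 - Real.exp (-1))⁻¹ = Real.exp 1/(Real.exp 1 - 1) := by
    rw [Real.exp_neg]
    have hE0 : 0 < Real.exp 1 := Real.exp_pos 1
    have : 1 - (Real.exp 1)⁻¹ = (Real.exp 1 - 1)/Real.exp 1 := by field_simp
    rw [this, inv_div]
  rw [he, hc]
  have hE0 : 0 < Real.exp 1 := Real.exp_pos 1
  have hE1' : (1:ℝ) < Real.exp 1 := by nlinarith [Real.add_one_le_exp (1:ℝ)]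
  have hne : Real.exp 1 - 1 ≠ 0 := ne_of_gt (by linarith)
  apply le_of_eq
  field_simp

lemma ray_lip {u v : ℂ} (hu : ‖u‖ < 1) (hv : ‖v‖ < 1) :
    ‖u - v‖ ≤ Real.exp (hypDist u v) - 1 := by
  obtain ⟨t, D, ht0, ht1, hDl, hDu, hD0, hDdef, htD, hiden, hexp⟩ := hyp_pack hu hv
  have h1 : (Real.exp (hypDist u v) - 1)*(1-t) = 2*t := by linarith [hexp]
  have h2 : 2*t ≤ Real.exp (hypDist u v) - 1 := by nlinarith [h1, ht0, ht1]
  calc ‖u - v‖ = t * D := htD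
    _ ≤ t * 2 := by apply mul_le_mul_of_nonneg_left hDu ht0
    _ ≤ Real.exp (hypDist u v) - 1 := by linarith

lemma meas_crossD {A : Set ℂ} (hA : IsCompact A) (hA1 : ∀ w ∈ A, ‖w‖ < 1) :
    MeasurableSet (crossD A) := by
  set Φ : (ℂ × ℂ) × ℂ → ℝ := fun q =>
    ((starRingEnd ℂ) q.1.1 * q.1.2).im * (‖q.2‖^2+1) +
      2*(((starRingEnd ℂ) q.1.2 - (starRingEnd ℂ) q.1.1) * q.2).im with hΦdef
  have hΦ : Continuous Φ := by
    apply Continuous.add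
    · apply Continuous.mul
      · exact Complex.continuous_im.comp ((Complex.continuous_conj.comp
          (continuous_fst.comp continuous_fst)).mul (continuous_snd.comp continuous_fst))
      · exact ((continuous_norm.comp continuous_snd).pow 2).add continuous_const
    · apply Continuous.mul continuous_const
      exact Complex.continuous_im.comp ((((Complex.continuous_conj.comp
        (continuous_snd.comp continuous_fst))).sub (Complex.continuous_conj.comp
          (continuous_fst.comp continuous_fst))).mul continuous_snd)
  set T : Set (ℂ × ℂ) := (Metric.sphere (0:ℂ) 1) ×ˢ (Metric.sphere (0:ℂ) 1) with hT
  set K : Set ((ℂ × ℂ) × ℂ) := (T ×ˢ A) ∩ Φ⁻¹' {0} with hK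
  have hKc : IsCompact K := by
    apply IsCompact.inter_right
    · exact ((isCompact_sphere 0 1).prod (isCompact_sphere 0 1)).prod hA
    · exact isClosed_singleton.preimage hΦ
  have hCc : IsClosed (Prod.fst '' K) := (hKc.image continuous_fst).isClosed
  have hCm : MeasurableSet (Prod.fst '' K) := hCc.measurableSet
  have hval : Measurable (Subtype.val : GeodD → ℂ × ℂ) := measurable_subtype_coe
  have heq : crossD A = Subtype.val ⁻¹' (Prod.fst '' K) := by
    ext g
    constructor
    · rintro ⟨w, hwg, hwA⟩
      refine ⟨((g.1.1, g.1.2), w), ?_, ?_⟩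
      · refine ⟨⟨⟨?_, ?_⟩, hwA⟩, ?_⟩
        · simpa [mem_sphere_iff_norm] using g.2.1
        · simpa [mem_sphere_iff_norm] using g.2.2
        · have := hwg.2
          simp only [hΦdef, mem_preimage, mem_singleton_iff]
          linarith [this]
      · simp
    · rintro ⟨⟨p, w⟩, ⟨⟨hpT, hwA⟩, hΦ0⟩, hfst⟩
      simp only [mem_preimage, mem_singleton_iff, hΦdef] at hΦ0
      obtain rfl : p = g.1 := hfst
      exact ⟨w, ⟨hA1 w hwA, by linarith [hΦ0]⟩, hwA⟩
  rw [heq]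
  exact hval hCm

/-- For a bounded measured lamination `λ` and a point `z ∈ S¹` not in the closure of the
base stratum `A` (so that there is a geodesic ray `f` from a point `z₀` of `A` to `z`),
the integral `∫ ẽ_z dλ_{A,z}` converges absolutely, where `λ_{A,z}` is the restriction of
`λ` to the geodesics separating `A` from `z` (the geodesics crossing the ray).  In
particular the infinitesimal earthquake `Ė^λ(z)` is well-defined. -/
theorem eTilde_integrable (μ : Measure GeodD)
    (hlam : IsLamD μ) (hbdd : IsBoundedLamD μ)
    (z : ℂ) (hz : ‖z‖ = 1) (f : ℝ → ℂ)
    (hin : ∀ s, 0 ≤ s → ‖f s‖ < 1)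
    (hiso : ∀ s t, 0 ≤ s → 0 ≤ t → hypDist (f s) (f t) = |s - t|)
    (hlim : Filter.Tendsto f Filter.atTop (nhds z)) :
    (∫⁻ g, ENNReal.ofReal (eAbs z g) ∂(μ.restrict (crossD (f '' Ici 0)))) < ⊤ := by
  classical
  obtain ⟨-, hBdd, hfin⟩ := hbdd
  obtain ⟨B, hB⟩ := hBdd
  have hr0 : ‖f 0‖ < 1 := hin 0 le_rfl
  have hr00 : (0:ℝ) ≤ ‖f 0‖ := norm_nonneg _
  have h1r2 : 0 < 1 - ‖f 0‖^2 := by nlinarith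
  set Cu : ℝ := 16/(1-‖f 0‖^2) with hCu
  have hCu0 : 0 < Cu := by rw [hCu]; positivity
  set cl : ℝ := (1-‖f 0‖)/4 with hcl
  have hcl0 : 0 < cl := by rw [hcl]; have h : 0 < 1-‖f 0‖ := by linarith
                           positivity
  set Cz : ℝ := Real.exp 1 * Cu / 2 with hCz
  have hCz0 : 0 < Cz := by rw [hCz]; positivity
  set Kc : ℝ := Cz^2/cl + 2*Cz + Cu with hKc
  have hKc0 : 0 < Kc := by rw [hKc]; positivity
  -- unit arcs
  have harc : ∀ d : ℕ, IsUnitArcD (f '' Icc (d:ℝ) (d+1)) := by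
    intro d
    refine ⟨fun u => f ((d:ℝ)+u), ?_, ?_, ?_⟩
    · intro s hs
      exact hin _ (by have := hs.1; positivity)
    · intro s hs t ht
      rw [hiso _ _ (by have := hs.1; positivity) (by have := ht.1; positivity)]
      congr 1
      ring
    · have himg : Icc (d:ℝ) (d+1) = (fun u => (d:ℝ)+u) '' Icc 0 1 := by
        rw [image_const_add_Icc, add_zero]
      rw [himg, ← image_comp]
      rfl
  -- pointwise bound on each cross set
  have hpt : ∀ d : ℕ, ∀ g : GeodD, g ∈ crossD (f '' Icc (d:ℝ) (d+1)) →
      eAbs z g ≤ Kc * Real.exp (-(d:ℝ)) := by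
    intro d g hg
    obtain ⟨w, hwge, hwA⟩ := hg
    obtain ⟨s, hsI, rfl⟩ := hwA
    have hs0 : (0:ℝ) ≤ s := le_trans (Nat.cast_nonneg d) hsI.1
    have hsd : Real.exp (-s) ≤ Real.exp (-(d:ℝ)) := Real.exp_le_exp.2 (by linarith [hsI.1])
    have hE : (0:ℝ) < Real.exp (-s) := Real.exp_pos _
    by_cases hab : g.1.1 = g.1.2
    · have h0 : eAbs z g = 0 := by
        unfold eAbs; rw [hab, sub_self, div_zero, norm_zero]
      rw [h0]; positivity
    · have hb1 := ptBound z g.2.1 g.2.2 hab hwge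
      have hdec := ray_decay hin hiso hs0
      have htail := ray_tail hin hiso hlim hs0
      have hm1 : ‖f s‖ < 1 := hin s hs0
      have hm0 : (0:ℝ) ≤ ‖f s‖ := norm_nonneg _
      have hlow : cl * Real.exp (-s) ≤ 1 - ‖f s‖ := by
        have h2 := hdec.2
        rw [hcl]
        nlinarith [h2, sq_nonneg (1-‖f s‖)]
      have hup : 1 - ‖f s‖^2 ≤ Cu * Real.exp (-s) := by rw [hCu]; exact hdec.1
      have hzw : ‖z - f s‖ ≤ Cz * Real.exp (-s) := by rw [hCz, hCu]; exact htail
      have hz2 : ‖z - f s‖^2/(1-‖f s‖) ≤ Cz^2/cl * Real.exp (-s) := by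
        have hnum : ‖z - f s‖^2 ≤ (Cz*Real.exp (-s))^2 := by
          nlinarith [norm_nonneg (z - f s), hzw]
        have hd1 : ‖z - f s‖^2/(1-‖f s‖) ≤ (Cz*Real.exp (-s))^2/(cl*Real.exp (-s)) :=
          div_le_div₀ (by positivity) hnum (by positivity) hlow
        have he2 : (Cz*Real.exp (-s))^2/(cl*Real.exp (-s)) = Cz^2/cl * Real.exp (-s) := by
          field_simp
        rw [he2] at hd1
        exact hd1
      calc eAbs z g ≤ ‖z - f s‖^2/(1-‖f s‖) + 2*‖z - f s‖ + (1-‖f s‖^2) := hb1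
        _ ≤ Cz^2/cl * Real.exp (-s) + 2*(Cz*Real.exp (-s)) + Cu * Real.exp (-s) := by
            have := hzw; have := hz2; have := hup
            linarith
        _ = Kc * Real.exp (-s) := by rw [hKc]; ring
        _ ≤ Kc * Real.exp (-(d:ℝ)) := mul_le_mul_of_nonneg_left hsd hKc0.le
  -- covering
  have hcover : crossD (f '' Ici 0) = ⋃ d : ℕ, crossD (f '' Icc (d:ℝ) (d+1)) := by
    have h1 : (Ici (0:ℝ)) = ⋃ d : ℕ, Icc (d:ℝ) (d+1) := by
      ext x
      simp only [mem_Ici, mem_iUnion, mem_Icc]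
      constructor
      · intro hx
        exact ⟨⌊x⌋₊, Nat.floor_le hx, (Nat.lt_floor_add_one x).le⟩
      · rintro ⟨d, hd1, hd2⟩
        exact le_trans (Nat.cast_nonneg d) hd1
    rw [h1, image_iUnion]
    ext g
    simp only [crossD, mem_setOf_eq, mem_iUnion]
    rw [inter_iUnion, nonempty_iUnion]
  -- measurability
  have hcont : ∀ d : ℕ, ContinuousOn f (Icc (d:ℝ) (d+1)) := by
    intro d
    apply LipschitzOnWith.continuousOn (K := Real.toNNReal (Real.exp 1 - 1))
    apply LipschitzOnWith.of_dist_le_mul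
    intro x hx y hy
    have hx0 : (0:ℝ) ≤ x := le_trans (Nat.cast_nonneg d) hx.1
    have hy0 : (0:ℝ) ≤ y := le_trans (Nat.cast_nonneg d) hy.1
    have h1 : ‖f x - f y‖ ≤ Real.exp |x - y| - 1 := by
      have := ray_lip (hin x hx0) (hin y hy0)
      rw [hiso x y hx0 hy0] at this
      exact this
    have habs : |x - y| ≤ 1 := by
      rw [abs_le]
      constructor <;> [linarith [hx.1, hy.2]; linarith [hx.2, hy.1]]
    have habs0 : 0 ≤ |x - y| := abs_nonneg _
    have hcx : Real.exp |x-y| ≤ 1 + (Real.exp 1 - 1)*|x-y| := by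
      have h := convexOn_exp.2 (Set.mem_univ (0:ℝ)) (Set.mem_univ (1:ℝ))
        (by linarith : (0:ℝ) ≤ 1 - |x-y|) habs0 (by ring)
      simp only [smul_eq_mul, mul_zero, mul_one, zero_add, Real.exp_zero] at h
      calc Real.exp |x - y| = Real.exp ((1-|x - y|) * 0 + |x - y| * 1) := by
            norm_num
        _ ≤ (1-|x - y|) * 1 + |x - y| * Real.exp 1 := by
            simpa [smul_eq_mul, Real.exp_zero] using h
        _ = 1 + (Real.exp 1 - 1) * |x - y| := by ring
    have hc1 : (1:ℝ) ≤ Real.exp 1 := Real.one_le_exp (by norm_num)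
    rw [dist_eq_norm, Real.dist_eq, Real.coe_toNNReal _ (by linarith)]
    linarith
  have hmeas : ∀ d : ℕ, MeasurableSet (crossD (f '' Icc (d:ℝ) (d+1))) := by
    intro d
    apply meas_crossD
    · exact isCompact_Icc.image_of_continuousOn (hcont d)
    · rintro w ⟨s, hsI, rfl⟩
      exact hin s (le_trans (Nat.cast_nonneg d) hsI.1)
  -- assemble the integral
  rw [hcover]
  refine lt_of_le_of_lt (lintegral_iUnion_le _ _) ?_
  have hterm : ∀ d : ℕ,
      (∫⁻ g in crossD (f '' Icc (d:ℝ) (d+1)), ENNReal.ofReal (eAbs z g) ∂μ)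
        ≤ ENNReal.ofReal ((Kc * B) * Real.exp (-(d:ℝ))) := by
    intro d
    have h1 : (∫⁻ g in crossD (f '' Icc (d:ℝ) (d+1)), ENNReal.ofReal (eAbs z g) ∂μ)
        ≤ ∫⁻ _ in crossD (f '' Icc (d:ℝ) (d+1)),
            ENNReal.ofReal (Kc * Real.exp (-(d:ℝ))) ∂μ := by
      apply setLIntegral_mono' (hmeas d)
      intro g hg
      exact ENNReal.ofReal_le_ofReal (hpt d g hg)
    rw [setLIntegral_const] at h1
    have hμd : μ (crossD (f '' Icc (d:ℝ) (d+1))) ≤ ENNReal.ofReal B := by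
      have hne := hfin _ (harc d)
      have hmem : (μ (crossD (f '' Icc (d:ℝ) (d+1)))).toReal ∈ thSetD μ :=
        ⟨_, harc d, rfl⟩
      have hle := hB hmem
      calc μ (crossD (f '' Icc (d:ℝ) (d+1)))
          = ENNReal.ofReal (μ (crossD (f '' Icc (d:ℝ) (d+1)))).toReal :=
            (ENNReal.ofReal_toReal hne).symm
        _ ≤ ENNReal.ofReal B := ENNReal.ofReal_le_ofReal hle
    calc (∫⁻ g in crossD (f '' Icc (d:ℝ) (d+1)), ENNReal.ofReal (eAbs z g) ∂μ)
        ≤ ENNReal.ofReal (Kc * Real.exp (-(d:ℝ))) * μ (crossD (f '' Icc (d:ℝ) (d+1))) := h1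
      _ ≤ ENNReal.ofReal (Kc * Real.exp (-(d:ℝ))) * ENNReal.ofReal B :=
          mul_le_mul_right hμd _
      _ = ENNReal.ofReal ((Kc * B) * Real.exp (-(d:ℝ))) := by
          rw [← ENNReal.ofReal_mul (by positivity)]
          ring_nf
  refine lt_of_le_of_lt (ENNReal.tsum_le_tsum hterm) ?_
  have hgeom : ∀ d : ℕ, (Kc * B) * Real.exp (-(d:ℝ)) = (Kc*B) * (Real.exp (-1))^d := by
    intro d
    rw [← Real.exp_nat_mul]
    congr 2
    ring
  have hsummable : Summable (fun d : ℕ => (Kc*B)*Real.exp (-(d:ℝ))) := by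
    apply Summable.congr (f := fun d : ℕ => (Kc*B)*(Real.exp (-1))^d)
    · apply Summable.mul_left
      exact summable_geometric_of_lt_one (Real.exp_nonneg _)
        (by rw [Real.exp_lt_one_iff]; norm_num)
    · intro d
      exact (hgeom d).symm
  have hBnn : 0 ≤ B := by
    have hmem : (μ (crossD (f '' Icc (0:ℝ) (0+1)))).toReal ∈ thSetD μ := by
      have := harc 0
      push_cast at this ⊢
      exact ⟨_, this, rfl⟩
    exact le_trans ENNReal.toReal_nonneg (by exact_mod_cast hB hmem)
  rw [← ENNReal.ofReal_tsum_of_nonneg (fun d => by positivity) hsummable]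
  exact ENNReal.ofReal_lt_top
end
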